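/- Suppose G is a torsion-free abelian group containing no isomorphic copy of ℚ. Let a : ℕ → ℤ satisfy n! ∣ a(n) for all n (i.e., a ∈ S*), and let c : ℕ → G be any sequence of elements of G. Then there is at most one y ∈ G such that for every n ∈ ℕ, n! divides (y - Σ_{l<n} a(l) • c(l)) in G. -/

import Mathlib

/-- A group `G` is torsion-free: `n • x ≠ 0` for every `x ≠ 0` and integer `n > 0`. -/
def IsTorsionFreeGroup (G : Type*) [AddCommGroup G] : Prop :=
  ∀ x : G, x ≠ 0 → ∀ n : ℤ, 0 < n → n • x ≠ 0

/-- `G` contains a subgroup isomorphic to `A`. -/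
def ContainsCopy (A G : Type*) [AddCommGroup A] [AddCommGroup G] : Prop :=
  ∃ f : A →+ G, Function.Injective f

/-- `S* = {a : ℕ → ℤ | ∀ n, n! ∣ a n}`. -/
def Sstar : Set (ℕ → ℤ) := {a | ∀ n : ℕ, (n.factorial : ℤ) ∣ a n}

/-- The formula `φ_a(y; c)`: for every `n`, `n!` divides `y - Σ_{l<n} a l • c l` in `G`. -/
def PhiFormula {G : Type*} [AddCommGroup G] (a : ℕ → ℤ) (c : ℕ → G) (y : G) : Prop :=
  ∀ n : ℕ, ∃ z : G, (n.factorial : ℤ) • z = y - ∑ l ∈ Finset.range n, a l • c l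

/-- In a torsion-free group with no copy of `ℚ`, there is at most one `y`
satisfying `φ_a(y; c)`. -/
theorem phi_unique (G : Type*) [AddCommGroup G]
    (hG : IsTorsionFreeGroup G) (hQ : ¬ ContainsCopy ℚ G)
    (a : ℕ → ℤ) (ha : a ∈ Sstar) (c : ℕ → G) :
    ∀ y₁ y₂ : G, PhiFormula a c y₁ → PhiFormula a c y₂ → y₁ = y₂ := by
  intro y₁ y₂ h1 h2
  by_contra hne
  set d : G := y₁ - y₂ with hd
  have hdne : d ≠ 0 := sub_ne_zero.mpr hne
  have hdiv : ∀ n : ℕ, ∃ z : G, (n.factorial : ℤ) • z = d := by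
    intro n
    obtain ⟨z1, hz1⟩ := h1 n
    obtain ⟨z2, hz2⟩ := h2 n
    exact ⟨z1 - z2, by rw [smul_sub, hz1, hz2, hd]; abel⟩
  choose z hz using hdiv
  have hcancel : ∀ (k : ℤ), k ≠ 0 → ∀ x : G, k • x = 0 → x = 0 := by
    intro k hk x hx
    by_contra hxne
    rcases lt_or_gt_of_ne hk with hneg | hpos
    · exact hG x hxne (-k) (by omega) (by rw [neg_smul, hx, neg_zero])
    · exact hG x hxne k hpos hx
  have hcancel' : ∀ (k : ℤ), k ≠ 0 → ∀ x y : G, k • x = k • y → x = y := by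
    intro k hk x y hxy
    have := hcancel k hk (x - y) (by rw [smul_sub, hxy, sub_self])
    exact sub_eq_zero.mp this
  have hfacne : ∀ n : ℕ, ((n.factorial : ℤ)) ≠ 0 := by
    intro n; exact_mod_cast n.factorial_ne_zero
  have hco : ∀ m n : ℕ, m ≤ n → z m = ((n.factorial / m.factorial : ℕ) : ℤ) • z n := by
    intro m n hmn
    apply hcancel' (m.factorial : ℤ) (hfacne m)
    rw [hz m, smul_smul]
    have h1 : (m.factorial : ℤ) * ((n.factorial / m.factorial : ℕ) : ℤ) = (n.factorial : ℤ) := by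
      have := Nat.mul_div_cancel' (Nat.factorial_dvd_factorial hmn)
      exact_mod_cast this
    rw [h1, hz n]
  have hint : ∀ (q : ℚ) (n : ℕ), q.den ≤ n →
      ((q * (n.factorial : ℚ)).num : ℚ) = q * (n.factorial : ℚ) := by
    intro q n hn
    obtain ⟨t, ht⟩ := Nat.dvd_factorial q.pos hn
    have hq : (q.den : ℚ) ≠ 0 := by exact_mod_cast q.den_nz
    have hqd : q * (q.den : ℚ) = (q.num : ℚ) :=
      ((div_eq_iff hq).mp (Rat.num_div_den q)).symm
    have heq : q * (n.factorial : ℚ) = ((q.num * t : ℤ) : ℚ) := by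
      rw [ht]
      push_cast
      rw [← mul_assoc, hqd]
    rw [heq, Rat.num_intCast]
  have hg : ∀ (q : ℚ) (m n : ℕ), q.den ≤ m → m ≤ n →
      (q * (m.factorial : ℚ)).num • z m = (q * (n.factorial : ℚ)).num • z n := by
    intro q m n hqm hmn
    rw [hco m n hmn, smul_smul]
    congr 1
    have h2 : ((m.factorial : ℚ)) * ((n.factorial / m.factorial : ℕ) : ℚ) = (n.factorial : ℚ) := by
      have := Nat.mul_div_cancel' (Nat.factorial_dvd_factorial hmn)
      exact_mod_cast this
    have key : (((q * (m.factorial : ℚ)).num * ((n.factorial / m.factorial : ℕ) : ℤ) : ℤ) : ℚ)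
        = (((q * (n.factorial : ℚ)).num : ℤ) : ℚ) := by
      rw [Int.cast_mul, hint q m hqm, hint q n (hqm.trans hmn), mul_assoc, Int.cast_natCast, h2]
    exact_mod_cast key
  apply hQ
  refine ⟨AddMonoidHom.mk' (fun q => (q * (q.den.factorial : ℚ)).num • z q.den) ?_, ?_⟩
  · intro p q
    set n := max (max p.den q.den) (p + q).den with hn
    have h1 : (p + q).den ≤ n := le_max_right _ _
    have h2 : p.den ≤ n := le_trans (le_max_left _ _) (le_max_left _ _)
    have h3 : q.den ≤ n := le_trans (le_max_right _ _) (le_max_left _ _)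
    rw [hg (p + q) _ n (le_refl _) h1, hg p _ n (le_refl _) h2, hg q _ n (le_refl _) h3,
      ← add_smul]
    congr 1
    have key : ((((p + q) * (n.factorial : ℚ)).num : ℤ) : ℚ)
        = (((p * (n.factorial : ℚ)).num + (q * (n.factorial : ℚ)).num : ℤ) : ℚ) := by
      push_cast
      rw [hint _ n h1, hint _ n h2, hint _ n h3]
      ring
    exact_mod_cast key
  · rw [injective_iff_map_eq_zero]
    intro q hq
    by_contra hqne
    simp only [AddMonoidHom.mk'_apply] at hq
    have hnum : (q * (q.den.factorial : ℚ)).num ≠ 0 := by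
      rw [Rat.num_ne_zero]
      exact mul_ne_zero hqne (by exact_mod_cast q.den.factorial_ne_zero)
    have hzne : z q.den ≠ 0 := by
      intro h0
      apply hdne
      rw [← hz q.den, h0, smul_zero]
    exact hzne (hcancel _ hnum _ hq)
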